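/- Suppose Assumption G holds (each u_i is upper semicontinuous, concave, u_i(x⁰_i) finite, and u_i(x + r·g) > u_i(x) whenever u_i(x) > −∞ and r > 0) and Assumption S holds: there is ε > 0 such that v(z) := sup{∑_i D_i(x_i) : ∑_i x_i = z} is finite for all ‖z‖ ≤ ε. Then x⁰ is a double auction equilibrium (CS(x⁰) = v(0) = 0) if and only if there exists a price vector p ∈ ℝ^J that is a supergradient of D_i at 0 for every i ∈ I. -/

import Mathlib

open scoped BigOperators
open Metric Filter

noncomputable section

/-- The inner product `p·y = ∑ j, p j * y j`. -/
def dotp {J : Type*} [Fintype J] (p y : EuclideanSpace ℝ J) : ℝ := ∑ j, p j * y j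

/-- A function `u : ℝ^J → ℝ ∪ {±∞}` is concave iff its hypograph is convex. -/
def HypoConcave {J : Type*} [Fintype J] (u : EuclideanSpace ℝ J → EReal) : Prop :=
  Convex ℝ {q : EuclideanSpace ℝ J × ℝ | (q.2 : EReal) ≤ u q.1}

/-- Indifference price function `D(x) = sup {r ∈ ℝ : u(x⁰ + x − r·g) ≥ u(x⁰)}`,
the supremum being taken in `ℝ ∪ {±∞}`. -/
def indiff {J : Type*} [Fintype J] (u : EuclideanSpace ℝ J → EReal)
    (x0 g x : EuclideanSpace ℝ J) : EReal :=
  sSup {e : EReal | ∃ r : ℝ, e = (r : EReal) ∧ u x0 ≤ u (x0 + x - r • g)}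

/-- `p` is a supergradient of `D` at `xb`: `D xb` is finite and
`D x ≤ D xb + p·(x − xb)` for all `x`. -/
def IsSupergradient {J : Type*} [Fintype J] (D : EuclideanSpace ℝ J → EReal)
    (p xb : EuclideanSpace ℝ J) : Prop :=
  D xb ≠ ⊥ ∧ D xb ≠ ⊤ ∧ ∀ x, D x ≤ D xb + ((dotp p (x - xb) : ℝ) : EReal)

/-- Optimal value `v(z)` of the perturbed market clearing problem `(P_z)`. -/
def marketValue {I J : Type*} [Fintype I] [Fintype J]
    (D : I → EuclideanSpace ℝ J → EReal) (z : EuclideanSpace ℝ J) : EReal :=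
  sSup {e : EReal | ∃ x : I → EuclideanSpace ℝ J, (∑ i, x i) = z ∧ e = ∑ i, D i (x i)}

/-- Optimal value of problem `(P')`, the total consumer surplus at allocation `w`. -/
def CSval {I J : Type*} [Fintype I] [Fintype J]
    (u : I → EuclideanSpace ℝ J → EReal) (g : EuclideanSpace ℝ J)
    (w : I → EuclideanSpace ℝ J) : EReal :=
  sSup {e : EReal | ∃ s : ℝ, e = (s : EReal) ∧ ∃ z : I → EuclideanSpace ℝ J,
    (∑ i, z i) + s • g = ∑ i, w i ∧ ∀ i, u i (w i) ≤ u i (z i)}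

/-- Recession function `u^∞(y) = inf_{α>0} (u(x⁰ + α·y) − u(x⁰))/α`. -/
def recession {J : Type*} [Fintype J] (u : EuclideanSpace ℝ J → EReal)
    (x0 y : EuclideanSpace ℝ J) : EReal :=
  sInf {e : EReal | ∃ α : ℝ, 0 < α ∧ e = (u (x0 + α • y) - u x0) / (α : EReal)}

/-- Pareto efficiency of an allocation `x` with total endowment `∑ i, x i`. -/
def ParetoEfficient {I J : Type*} [Fintype I] [Fintype J]
    (u : I → EuclideanSpace ℝ J → EReal) (x : I → EuclideanSpace ℝ J) : Prop :=
  ¬ ∃ x' : I → EuclideanSpace ℝ J, (∑ i, x' i) = (∑ i, x i) ∧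
      (∀ i, u i (x i) ≤ u i (x' i)) ∧ ∃ i, u i (x i) < u i (x' i)

lemma coe_real_sum {ι : Type*} (s : Finset ι) (f : ι → ℝ) :
    ((∑ i ∈ s, f i : ℝ) : EReal) = ∑ i ∈ s, (f i : EReal) :=
  map_sum (⟨⟨Real.toEReal, EReal.coe_zero⟩, EReal.coe_add⟩ : ℝ →+ EReal) f s

lemma esum_apply {J ι : Type*} [Fintype J] (s : Finset ι) (f : ι → EuclideanSpace ℝ J) (j : J) :
    (∑ i ∈ s, f i) j = ∑ i ∈ s, f i j := by
  classical
  induction s using Finset.cons_induction with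
  | empty => rfl
  | cons a s ha ih => rw [Finset.sum_cons, Finset.sum_cons, ← ih]; rfl

lemma dotp_sum {J ι : Type*} [Fintype J] (p : EuclideanSpace ℝ J) (s : Finset ι)
    (x : ι → EuclideanSpace ℝ J) : dotp p (∑ i ∈ s, x i) = ∑ i ∈ s, dotp p (x i) := by
  simp only [dotp, esum_apply, Finset.mul_sum]
  rw [Finset.sum_comm]

lemma dotp_zero {J : Type*} [Fintype J] (p : EuclideanSpace ℝ J) : dotp p 0 = 0 := by
  simp [dotp]

lemma euclid_abs_le {J : Type*} [Fintype J] (z : EuclideanSpace ℝ J) (j : J) : |z j| ≤ ‖z‖ := by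
  rw [EuclideanSpace.norm_eq, ← Real.sqrt_sq_eq_abs]
  apply Real.sqrt_le_sqrt
  have := Finset.single_le_sum (f := fun j => ‖z j‖ ^ 2) (fun i _ => by positivity)
    (Finset.mem_univ j)
  simpa using this

lemma euclid_sum_single {J : Type*} [Fintype J] [DecidableEq J] (z : EuclideanSpace ℝ J) :
    ∑ j, z j • EuclideanSpace.single j (1:ℝ) = z := by
  ext j'
  simp only [esum_apply, PiLp.smul_apply, EuclideanSpace.single_apply, smul_eq_mul, mul_ite,
    mul_one, mul_zero]
  simp [Finset.sum_ite_eq']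
lemma indiff_zero {J : Type*} [Fintype J] {u : EuclideanSpace ℝ J → EReal}
    {x0 g : EuclideanSpace ℝ J} (hfin : u x0 ≠ ⊥)
    (hmono : ∀ (x : EuclideanSpace ℝ J) (r : ℝ), u x ≠ ⊥ → 0 < r → u x < u (x + r • g)) :
    indiff u x0 g 0 = 0 := by
  unfold indiff
  apply le_antisymm
  · apply sSup_le
    rintro e ⟨r, rfl, h⟩
    by_contra hlt
    push_neg at hlt
    have hr : (0:ℝ) < r := by exact_mod_cast hlt
    set y := x0 + 0 - r • g with hy
    have hyx : y + r • g = x0 := by rw [hy]; abel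
    by_cases hby : u y = ⊥
    · rw [hby, le_bot_iff] at h; exact hfin h
    · have h2 := hmono y r hby hr
      rw [hyx] at h2
      exact not_le.mpr h2 h
  · apply le_sSup
    refine ⟨0, by simp, ?_⟩
    simp

def Kset {I J : Type*} [Fintype I] [Fintype J] (u : I → EuclideanSpace ℝ J → EReal)
    (x0 : I → EuclideanSpace ℝ J) (g : EuclideanSpace ℝ J) : Set (EuclideanSpace ℝ J × ℝ) :=
  {q | ∃ (x : I → EuclideanSpace ℝ J) (r : I → ℝ), (∑ i, x i) = q.1 ∧ q.2 ≤ ∑ i, r i ∧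
    ∀ i, u i (x0 i) ≤ u i (x0 i + x i - r i • g)}

lemma Kset_convex {I J : Type*} [Fintype I] [Fintype J] (u : I → EuclideanSpace ℝ J → EReal)
    (x0 : I → EuclideanSpace ℝ J) (g : EuclideanSpace ℝ J)
    (hconc : ∀ i, HypoConcave (u i)) (hne_top : ∀ i x, u i x ≠ ⊤)
    (hfin : ∀ i, u i (x0 i) ≠ ⊥) : Convex ℝ (Kset u x0 g) := by
  rintro ⟨z, s⟩ ⟨x, r, hx, hs, hfeas⟩ ⟨z', s'⟩ ⟨x', r', hx', hs', hfeas'⟩ a b ha hb hab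
  obtain rfl : b = 1 - a := by linarith
  refine ⟨fun i => a • x i + (1-a) • x' i, fun i => a * r i + (1-a) * r' i, ?_, ?_, ?_⟩
  · simp only [Finset.sum_add_distrib, ← Finset.smul_sum, hx, hx']
    rfl
  · simp only [Finset.sum_add_distrib, ← Finset.mul_sum]
    have : (a • (z, s) + (1-a) • (z', s')).2 = a * s + (1-a) * s' := rfl
    rw [this]
    exact add_le_add (mul_le_mul_of_nonneg_left hs ha) (mul_le_mul_of_nonneg_left hs' hb)
  · intro i
    set c := (u i (x0 i)).toReal with hcdef
    have hcoe : ((c : ℝ) : EReal) = u i (x0 i) := EReal.coe_toReal (hne_top i _) (hfin i)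
    have h1 : ((x0 i + x i - r i • g, c) : _ × ℝ) ∈
        {q : EuclideanSpace ℝ J × ℝ | (q.2:EReal) ≤ u i q.1} := by
      simp only [Set.mem_setOf_eq, hcoe]; exact hfeas i
    have h2 : ((x0 i + x' i - r' i • g, c) : _ × ℝ) ∈
        {q : EuclideanSpace ℝ J × ℝ | (q.2:EReal) ≤ u i q.1} := by
      simp only [Set.mem_setOf_eq, hcoe]; exact hfeas' i
    have h3 := hconc i h1 h2 ha hb hab
    simp only [Prod.smul_mk, Prod.mk_add_mk, smul_eq_mul, Set.mem_setOf_eq] at h3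
    have hcc : a * c + (1-a) * c = c := by ring
    rw [hcc, hcoe] at h3
    have heq : a • (x0 i + x i - r i • g) + (1-a) • (x0 i + x' i - r' i • g)
        = x0 i + (a • x i + (1-a) • x' i) - (a * r i + (1-a) * r' i) • g := by
      module
    rwa [heq] at h3

lemma Kset_le_marketValue {I J : Type*} [Fintype I] [Fintype J]
    (u : I → EuclideanSpace ℝ J → EReal) (x0 : I → EuclideanSpace ℝ J)
    (g : EuclideanSpace ℝ J) {q : EuclideanSpace ℝ J × ℝ} (hq : q ∈ Kset u x0 g) :
    (q.2 : EReal) ≤ marketValue (fun i => indiff (u i) (x0 i) g) q.1 := by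
  obtain ⟨x, r, hx, hs, hfeas⟩ := hq
  calc (q.2 : EReal) ≤ ((∑ i, r i : ℝ) : EReal) := by exact_mod_cast hs
    _ = ∑ i, ((r i : ℝ) : EReal) := coe_real_sum _ _
    _ ≤ ∑ i, indiff (u i) (x0 i) g (x i) :=
        Finset.sum_le_sum (fun i _ => le_sSup ⟨r i, rfl, hfeas i⟩)
    _ ≤ marketValue (fun i => indiff (u i) (x0 i) g) q.1 := le_sSup ⟨x, hx, rfl⟩

lemma exists_mem_Kset {I J : Type*} [Fintype I] [Fintype J]
    (u : I → EuclideanSpace ℝ J → EReal) (x0 : I → EuclideanSpace ℝ J)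
    (g : EuclideanSpace ℝ J) {z : EuclideanSpace ℝ J}
    (h : marketValue (fun i => indiff (u i) (x0 i) g) z ≠ ⊥) :
    ∃ s : ℝ, ((z, s) : _ × ℝ) ∈ Kset u x0 g := by
  classical
  rw [marketValue, Ne, sSup_eq_bot] at h
  push_neg at h
  obtain ⟨e, ⟨x, hx, rfl⟩, hne⟩ := h
  have hi : ∀ i, indiff (u i) (x0 i) g (x i) ≠ ⊥ := by
    intro i hbot
    apply hne
    rw [← Finset.add_sum_erase _ _ (Finset.mem_univ i), hbot, EReal.bot_add]
  have hr : ∀ i, ∃ ri : ℝ, u i (x0 i) ≤ u i (x0 i + x i - ri • g) := by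
    intro i
    have h2 := hi i
    rw [indiff, Ne, sSup_eq_bot] at h2
    push_neg at h2
    obtain ⟨e, ⟨ri, rfl, hfe⟩, -⟩ := h2
    exact ⟨ri, hfe⟩
  choose r hrf using hr
  exact ⟨∑ i, r i, x, r, hx, le_refl _, hrf⟩

lemma indiff_le_dotp {I J : Type*} [Fintype I] [Fintype J]
    (u : I → EuclideanSpace ℝ J → EReal) (x0 : I → EuclideanSpace ℝ J)
    (g : EuclideanSpace ℝ J) (p : EuclideanSpace ℝ J)
    (hp : ∀ q ∈ Kset u x0 g, q.2 ≤ dotp p q.1) (i : I) (x : EuclideanSpace ℝ J) :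
    indiff (u i) (x0 i) g x ≤ ((dotp p x : ℝ) : EReal) := by
  classical
  by_contra hlt
  push_neg at hlt
  obtain ⟨t, h1, h2⟩ := EReal.exists_between_coe_real hlt
  rw [indiff] at h2
  obtain ⟨e, ⟨ri, rfl, hfe⟩, hte⟩ := lt_sSup_iff.mp h2
  have hmem : ((x, t) : _ × ℝ) ∈ Kset u x0 g := by
    refine ⟨fun k => if k = i then x else 0, fun k => if k = i then ri else 0, ?_, ?_, ?_⟩
    · simp [Finset.sum_ite_eq']
    · simp only [Finset.sum_ite_eq', Finset.mem_univ, if_true]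
      exact_mod_cast hte.le
    · intro k
      by_cases hk : k = i
      · subst hk; simpa using hfe
      · simp [hk]
  have h3 := hp _ hmem
  exact absurd h3 (not_le.mpr (by exact_mod_cast h1))

set_option maxHeartbeats 1600000 in
/-- Lemma ve, 1 ⇔ 2: equilibrium iff a common supergradient of
the indifference price functions at 0 exists. -/
theorem equilibrium_iff_common_supergradient
    {I J : Type*} [Fintype I] [Nonempty I] [Fintype J] [Nonempty J]
    (u : I → EuclideanSpace ℝ J → EReal) (g : EuclideanSpace ℝ J)
    (x0 : I → EuclideanSpace ℝ J)
    (husc : ∀ i, UpperSemicontinuous (u i))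
    (hconc : ∀ i, HypoConcave (u i))
    (hne_top : ∀ i x, u i x ≠ ⊤)
    (hfin : ∀ i, u i (x0 i) ≠ ⊥)
    (hmono : ∀ i, ∀ x : EuclideanSpace ℝ J, ∀ r : ℝ, u i x ≠ ⊥ → 0 < r →
      u i x < u i (x + r • g))
    (hS : ∃ ε : ℝ, 0 < ε ∧ ∀ z : EuclideanSpace ℝ J, ‖z‖ ≤ ε →
      marketValue (fun i => indiff (u i) (x0 i) g) z ≠ ⊥ ∧
      marketValue (fun i => indiff (u i) (x0 i) g) z ≠ ⊤) :
    marketValue (fun i => indiff (u i) (x0 i) g) 0 = 0 ↔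
      ∃ p : EuclideanSpace ℝ J, ∀ i,
        IsSupergradient (indiff (u i) (x0 i) g) p 0 := by
  classical
  obtain ⟨ε, hε, hSfin⟩ := hS
  set D := fun i => indiff (u i) (x0 i) g with hD
  have hD0 : ∀ i, D i 0 = 0 := fun i => indiff_zero (hfin i) (fun x r => hmono i x r)
  have hv0_ge : (0:EReal) ≤ marketValue D 0 := by
    apply le_sSup
    refine ⟨fun _ => 0, by simp, ?_⟩
    simp [hD0]
  constructor
  · intro hv0
    -- forward direction: construct the price p by separation
    set K := Kset u x0 g with hK
    have hKconv : Convex ℝ K := Kset_convex u x0 g hconc hne_top hfin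
    have hKdown : ∀ (z : EuclideanSpace ℝ J) (s s' : ℝ),
        ((z, s) : _ × ℝ) ∈ K → s' ≤ s → ((z, s') : _ × ℝ) ∈ K := by
      rintro z s s' ⟨x, r, h1, h2, h3⟩ hss'
      exact ⟨x, r, h1, hss'.trans h2, h3⟩
    have hproj : ∀ z : EuclideanSpace ℝ J, ‖z‖ ≤ ε → ∃ s, ((z, s) : _ × ℝ) ∈ K :=
      fun z hz => exists_mem_Kset u x0 g (hSfin z hz).1
    -- a uniform level m so that a small ball × {m} lies in K
    set P : Option (J × Bool) → EuclideanSpace ℝ J := fun k =>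
      Option.rec 0 (fun jb => (if jb.2 then ε else -ε) • EuclideanSpace.single jb.1 (1:ℝ)) k
      with hP
    have hPnorm : ∀ k, ‖P k‖ ≤ ε := by
      rintro (_ | ⟨j, b⟩)
      · simpa [hP] using hε.le
      · simp only [hP]
        rw [norm_smul, EuclideanSpace.norm_single]
        rcases b <;> simp [abs_of_pos hε, abs_of_neg (neg_neg_iff_pos.mpr hε)]
    have hPs : ∀ k, ∃ s, ((P k, s) : _ × ℝ) ∈ K := fun k => hproj _ (hPnorm k)
    choose sv hsv using hPs
    set m : ℝ := Finset.univ.inf' Finset.univ_nonempty sv with hm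
    have hPm : ∀ k, ((P k, m) : _ × ℝ) ∈ K := fun k =>
      hKdown _ _ _ (hsv k) (Finset.inf'_le _ (Finset.mem_univ k))
    set n : ℕ := Fintype.card J with hn
    set ε' : ℝ := ε / (n + 1) with hε'
    have hε'pos : 0 < ε' := by positivity
    have hball : ∀ z : EuclideanSpace ℝ J, ‖z‖ ≤ ε' → ((z, m) : _ × ℝ) ∈ K := by
      intro z hz
      have habs : ∑ j, |z j| ≤ ε := by
        calc ∑ j, |z j| ≤ ∑ _j : J, ε' := Finset.sum_le_sum
              (fun j _ => (euclid_abs_le z j).trans hz)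
          _ = n * ε' := by simp [hn, mul_comm]
          _ ≤ ε := by
              rw [hε']
              calc (n : ℝ) * (ε / (n+1)) ≤ ((n:ℝ)+1) * (ε / (n+1)) := by
                    apply mul_le_mul_of_nonneg_right (by linarith) (by positivity)
                _ = ε := by field_simp
      set w : Option (J × Bool) → ℝ := fun k =>
        Option.rec (1 - (∑ j, |z j|) / ε)
          (fun jb => (if jb.2 then max (z jb.1) 0 else max (-(z jb.1)) 0) / ε) k with hw
      have hw0 : ∀ k, 0 ≤ w k := by
        rintro (_ | ⟨j, b⟩)
        · simp only [hw]
          have : (∑ j, |z j|) / ε ≤ 1 := by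
            rw [div_le_one hε]; exact habs
          simpa using this
        · rcases b <;> simp [hw] <;> positivity
      have hwsum : ∑ k, w k = 1 := by
        rw [Fintype.sum_option]
        have hj : ∀ j : J, ∑ b : Bool, w (some (j, b)) = |z j| / ε := by
          intro j
          rw [Fintype.sum_bool]
          simp only [hw]
          rw [← add_div]
          congr 1
          rcases le_total (z j) 0 with h | h
          · rw [max_eq_right h, max_eq_left (neg_nonneg.mpr h)]
            simp [abs_of_nonpos h]
          · rw [max_eq_left h, max_eq_right (neg_nonpos.mpr h)]
            simp [abs_of_nonneg h]
        have : ∑ jb : J × Bool, w (some jb) = (∑ j, |z j|) / ε := by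
          rw [Fintype.sum_prod_type]
          rw [Finset.sum_congr rfl (fun j _ => hj j), ← Finset.sum_div]
        rw [this]
        simp only [hw]
        ring
      have hcombo : ((z, m) : _ × ℝ) = ∑ k, w k • ((P k, m) : _ × ℝ) := by
        have h2 : (∑ k, w k • ((P k, m) : EuclideanSpace ℝ J × ℝ)) =
            (∑ k, w k • P k, ∑ k, w k * m) := by
          rw [Prod.ext_iff]
          constructor
          · rw [Prod.fst_sum]; rfl
          · rw [Prod.snd_sum]; rfl
        rw [h2]
        have hsnd : ∑ k, w k * m = m := by rw [← Finset.sum_mul, hwsum, one_mul]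
        have hfst : ∑ k, w k • P k = z := by
          rw [Fintype.sum_option]
          have hnone : w none • P none = 0 := by simp [hP]
          rw [hnone, zero_add, Fintype.sum_prod_type]
          have : ∀ j : J, ∑ b : Bool, w (some (j, b)) • P (some (j, b))
              = z j • EuclideanSpace.single j (1:ℝ) := by
            intro j
            rw [Fintype.sum_bool]
            simp only [hw, hP, if_true, if_false, Bool.false_eq_true]
            rw [smul_smul, smul_smul, ← add_smul]
            congr 1
            rw [div_mul_cancel₀ _ hε.ne']
            rw [div_mul_comm]
            rw [mul_comm ((-ε)/ε) _]
            rw [neg_div, div_self hε.ne']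
            rcases le_total (z j) 0 with h | h
            · rw [max_eq_right h, max_eq_left (neg_nonneg.mpr h)]
              ring
            · rw [max_eq_left h, max_eq_right (neg_nonpos.mpr h)]
              ring
          rw [Finset.sum_congr rfl (fun j _ => this j)]
          exact euclid_sum_single z
        rw [hfst, hsnd]
      rw [hcombo]
      exact hKconv.sum_mem (fun k _ => hw0 k) hwsum (fun k _ => hPm k)
    -- the point (0, m-1) is interior to K
    have hy0K : ((0, m - 1) : EuclideanSpace ℝ J × ℝ) ∈ interior K := by
      rw [mem_interior]
      refine ⟨Metric.ball (0 : EuclideanSpace ℝ J) ε' ×ˢ Set.Iio m, ?_, ?_, ?_⟩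
      · rintro ⟨z1, s1⟩ ⟨hz1, hs1⟩
        have hz1' : ‖z1‖ < ε' := by simpa using hz1
        exact hKdown z1 m s1 (hball z1 hz1'.le) (le_of_lt hs1)
      · exact Metric.isOpen_ball.prod isOpen_Iio
      · refine ⟨?_, ?_⟩
        · simpa using hε'pos
        · simp only [Set.mem_Iio]; linarith
    -- separate interior K from the upward ray at 0
    set T : Set (EuclideanSpace ℝ J × ℝ) := {(0 : EuclideanSpace ℝ J)} ×ˢ Set.Ioi (0:ℝ)
      with hT
    have hTconv : Convex ℝ T := (convex_singleton _).prod (convex_Ioi _)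
    have hdisj : Disjoint (interior K) T := by
      rw [Set.disjoint_left]
      rintro ⟨z1, s1⟩ hq ⟨hz1, hs1⟩
      simp only [Set.mem_singleton_iff] at hz1
      subst hz1
      have hle := Kset_le_marketValue u x0 g (interior_subset hq)
      rw [← hD, hv0] at hle
      have : s1 ≤ (0:ℝ) := by exact_mod_cast hle
      simp only [Set.mem_Ioi] at hs1
      linarith
    obtain ⟨f, c0, hf1, hf2⟩ :=
      geometric_hahn_banach_open (hKconv.interior) isOpen_interior hTconv hdisj
    set c : ℝ := f (0, 1) with hc
    have hfsplit : ∀ (z1 : EuclideanSpace ℝ J) (s1 : ℝ), f (z1, s1) = f (z1, 0) + s1 * c := by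
      intro z1 s1
      have hsum : ((z1, s1) : EuclideanSpace ℝ J × ℝ)
          = (z1, 0) + s1 • ((0:EuclideanSpace ℝ J), (1:ℝ)) := by
        simp [Prod.ext_iff]
      rw [hsum, map_add, map_smul, smul_eq_mul, hc]
    have hzero : f ((0:EuclideanSpace ℝ J), (0:ℝ)) = 0 := map_zero f
    -- f ≤ c0 on all of K
    have hfK : ∀ q ∈ K, f q ≤ c0 := by
      intro a ha
      have hseg : ∀ t : ℝ, 0 < t → t ≤ 1 →
          f ((1 - t) • a + t • ((0, m - 1) : EuclideanSpace ℝ J × ℝ)) < c0 := by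
        intro t ht ht1
        exact hf1 _ (hKconv.combo_closure_interior_mem_interior (subset_closure ha) hy0K
          (by linarith) ht (by ring))
      have hcont : Filter.Tendsto
          (fun t : ℝ => f ((1 - t) • a + t • ((0, m - 1) : EuclideanSpace ℝ J × ℝ)))
          (nhdsWithin 0 (Set.Ioi 0)) (nhds (f a)) := by
        have hc2 : Continuous
            (fun t : ℝ => f ((1 - t) • a + t • ((0, m - 1) : EuclideanSpace ℝ J × ℝ))) := by
          apply f.continuous.comp
          exact ((continuous_const.sub continuous_id).smul continuous_const).add
            (continuous_id.smul continuous_const)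
        have h3 := hc2.tendsto 0
        simp only [sub_zero, one_smul, zero_smul, add_zero] at h3
        exact h3.mono_left nhdsWithin_le_nhds
      refine le_of_tendsto hcont ?_
      filter_upwards [Ioo_mem_nhdsGT_of_mem (by norm_num : (0:ℝ) ∈ Set.Ico 0 1)] with t ht
      exact (hseg t ht.1 ht.2.le).le
    -- bounds from the ray
    have hray : ∀ t : ℝ, 0 < t → c0 ≤ t * c := by
      intro t ht
      have h4 := hf2 (0, t) ⟨rfl, ht⟩
      rwa [hfsplit, hzero, zero_add] at h4
    have hc0 : c0 ≤ 0 := by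
      have hlim : Filter.Tendsto (fun t : ℝ => t * c) (nhdsWithin 0 (Set.Ioi 0)) (nhds 0) := by
        have h5 : Filter.Tendsto (fun t : ℝ => t * c) (nhds 0) (nhds (0 * c)) :=
          (continuous_id.mul (continuous_const : Continuous fun _ : ℝ => c)).tendsto 0
        rw [zero_mul] at h5
        exact h5.mono_left nhdsWithin_le_nhds
      refine ge_of_tendsto hlim ?_
      filter_upwards [self_mem_nhdsWithin] with t ht
      exact hray t ht
    have hcnonneg : 0 ≤ c := by
      by_contra hneg
      push_neg at hneg
      have ht : 0 < (c0 - 1)/c := div_pos_of_neg_of_neg (by linarith) hneg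
      have h6 := hray _ ht
      rw [div_mul_cancel₀ _ hneg.ne] at h6
      linarith
    have hcpos : 0 < c := by
      rcases hcnonneg.lt_or_eq with h | h
      · exact h
      · exfalso
        have h2 := hf1 _ hy0K
        rw [hfsplit, hzero, zero_add, ← h, mul_zero] at h2
        linarith
    -- the price vector
    set p : EuclideanSpace ℝ J :=
      WithLp.toLp 2 (fun j => -f (EuclideanSpace.single j (1:ℝ), (0:ℝ)) / c : J → ℝ) with hpdef
    have hdotp : ∀ z1 : EuclideanSpace ℝ J, dotp p z1 = -f (z1, 0) / c := by
      intro z1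
      have hz1 : ((z1, (0:ℝ)) : EuclideanSpace ℝ J × ℝ)
          = ∑ j, z1 j • ((EuclideanSpace.single j (1:ℝ), (0:ℝ)) : EuclideanSpace ℝ J × ℝ) := by
        rw [Prod.ext_iff]
        constructor
        · rw [Prod.fst_sum]
          simp only [Prod.smul_fst]
          exact (euclid_sum_single z1).symm
        · rw [Prod.snd_sum]
          simp
      have hfz : f (z1, 0) = ∑ j, z1 j * f (EuclideanSpace.single j (1:ℝ), (0:ℝ)) := by
        rw [hz1, map_sum]
        exact Finset.sum_congr rfl (fun j _ => by rw [map_smul, smul_eq_mul])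
      calc dotp p z1 = ∑ j, -f (EuclideanSpace.single j (1:ℝ), (0:ℝ)) / c * z1 j := rfl
        _ = (∑ j, -(z1 j * f (EuclideanSpace.single j (1:ℝ), (0:ℝ)))) / c := by
            rw [Finset.sum_div]
            exact Finset.sum_congr rfl (fun j _ => by ring)
        _ = -f (z1, 0) / c := by
            rw [hfz, ← Finset.sum_neg_distrib]
    have hpK : ∀ q ∈ Kset u x0 g, q.2 ≤ dotp p q.1 := by
      rintro ⟨z1, s1⟩ hq
      have h1 : f (z1, s1) ≤ c0 := hfK _ hq
      rw [hfsplit] at h1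
      rw [hdotp, le_div_iff₀ hcpos]
      nlinarith
    refine ⟨p, fun i => ?_⟩
    have h00 : indiff (u i) (x0 i) g 0 = 0 := hD0 i
    refine ⟨by simp [h00], by simp [h00], ?_⟩
    intro x
    rw [h00, zero_add, sub_zero]
    exact indiff_le_dotp u x0 g p hpK i x
  · -- reverse direction
    rintro ⟨p, hp⟩
    refine le_antisymm ?_ hv0_ge
    apply sSup_le
    rintro e ⟨x, hx, rfl⟩
    have hi : ∀ i, D i (x i) ≤ ((dotp p (x i) : ℝ) : EReal) := by
      intro i
      have h3 := (hp i).2.2 (x i)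
      change D i (x i) ≤ D i 0 + ((dotp p (x i - 0) : ℝ) : EReal) at h3
      rwa [hD0 i, zero_add, sub_zero] at h3
    calc ∑ i, D i (x i) ≤ ∑ i, ((dotp p (x i) : ℝ) : EReal) :=
          Finset.sum_le_sum (fun i _ => hi i)
      _ = ((∑ i, dotp p (x i) : ℝ) : EReal) := (coe_real_sum _ _).symm
      _ = ((dotp p 0 : ℝ) : EReal) := by rw [← dotp_sum, hx]
      _ = 0 := by rw [dotp_zero]; rfl
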